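/- The right composition of packed words satisfies the sequential (nested) associativity axiom: for packed words u of length n, v of length m, w of length p, and indices i ∈ {1,…,n}, j ∈ {1,…,m}, one has (u ∘→_i v) ∘→_{i+j−1} w = u ∘→_i (v ∘→_j w). -/

import Mathlib

/-- Increment by `α` every letter strictly greater than `β`. -/
def Inc (α β : ℕ) (u : List ℕ) : List ℕ := u.map fun a => if β < a then a + α else a

/-- Maximal letter of a word. -/
def maxLetter (v : List ℕ) : ℕ := v.foldr max 0

/-- A packed word whose letter set is exactly `{1, …, k}`. -/
def IsPackedOn (k : ℕ) (w : List ℕ) : Prop := w.toFinset = Finset.Icc 1 k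

/-- A packed word. -/
def IsPacked (w : List ℕ) : Prop := ∃ k, IsPackedOn k w

/-- A permutation of `{1, …, n}` identified with the word `σ(1) ⋯ σ(n)`. -/
def IsPermWord (n : ℕ) (σ : List ℕ) : Prop :=
  σ.length = n ∧ σ.toFinset = Finset.Icc 1 n

/-- `σ` is the standardization of `w`: a permutation word of `{1, …, n}` with the same
inversions as `w` (0-based indexing). -/
def IsStdOf (w σ : List ℕ) : Prop :=
  IsPermWord w.length σ ∧
    ∀ i j : ℕ, i < j → j < w.length →
      (w.getD j 0 < w.getD i 0 ↔ σ.getD j 0 < σ.getD i 0)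

/-- The weakly increasing rearrangement (composition type) of a word. -/
def chi (w : List ℕ) : List ℕ := List.insertionSort (· ≤ ·) w

/-- Right composition `u ∘→_i v` of packed words (`i` is 1-based). -/
def rightComp (u : List ℕ) (i : ℕ) (v : List ℕ) : List ℕ :=
  Inc (maxLetter v - 1) (u.getD (i - 1) 0) (u.take (i - 1))
    ++ Inc (u.getD (i - 1) 0 - 1) 0 v
    ++ Inc (maxLetter v - 1) (u.getD (i - 1) 0 - 1) (u.drop i)

/-- Left composition `u ∘←_i v` of packed words: replace in `Inc (m-1) i u` every
occurrence of the letter `i` by the word `Inc (i-1) 0 v`, where `m` is the maximal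
letter of `v`. -/
def leftComp (u : List ℕ) (i : ℕ) (v : List ℕ) : List ℕ :=
  u.flatMap fun a =>
    if a = i then Inc (i - 1) 0 v else [if i < a then a + (maxLetter v - 1) else a]

/-- Block composition `B_i(α, β)` of permutation words (`i` is 1-based, `β` a permutation
of `{1, …, m}` with `m = β.length`). -/
def blockComp (α : List ℕ) (i : ℕ) (β : List ℕ) : List ℕ :=
  Inc (β.length - 1) (α.getD (i - 1) 0) (α.take (i - 1))
    ++ Inc (α.getD (i - 1) 0 - 1) 0 β
    ++ Inc (β.length - 1) (α.getD (i - 1) 0 - 1) (α.drop i)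

/-- The inverse of a permutation word. -/
def invWord (σ : List ℕ) : List ℕ :=
  (List.range σ.length).map fun p => σ.idxOf (p + 1) + 1

/-- The right action of a permutation word `σ` of `{1, …, n}` on a packed word with
letter set `{1, …, n}`: the `p`-th letter of `u · σ` is `σ⁻¹(u(p))`. -/
def permAct (u σ : List ℕ) : List ℕ := u.map fun a => (invWord σ).getD (a - 1) 0

/-- The identity permutation word of `{1, …, m}`. -/
def idWord (m : ℕ) : List ℕ := (List.range m).map (· + 1)

/-- `First k u`: keep only the `k` leftmost occurrences of each letter of `u`. -/
def First (k : ℕ) (u : List ℕ) : List ℕ :=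
  (List.range u.length).filterMap fun p =>
    if (u.take p).count (u.getD p 0) < k then some (u.getD p 0) else none

namespace RCAux

theorem length_Inc (α β : ℕ) (l : List ℕ) : (Inc α β l).length = l.length :=
  List.length_map _

theorem Inc_append (α β : ℕ) (l₁ l₂ : List ℕ) :
    Inc α β (l₁ ++ l₂) = Inc α β l₁ ++ Inc α β l₂ := List.map_append

theorem le_maxLetter {x : ℕ} {l : List ℕ} (h : x ∈ l) : x ≤ maxLetter l := by
  induction l with
  | nil => simp at h
  | cons y tl ih =>
    simp only [maxLetter, List.foldr_cons]
    rcases List.mem_cons.mp h with h | h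
    · subst h; exact le_max_left _ _
    · exact le_trans (ih h) (le_max_right _ _)

theorem maxLetter_le {c : ℕ} {l : List ℕ} (h : ∀ x ∈ l, x ≤ c) : maxLetter l ≤ c := by
  induction l with
  | nil => simp [maxLetter]
  | cons y tl ih =>
    simp only [maxLetter, List.foldr_cons]
    exact max_le (h y List.mem_cons_self) (ih fun x hx => h x (List.mem_cons_of_mem _ hx))

theorem mem_pos {l : List ℕ} (h : IsPacked l) : ∀ x ∈ l, 1 ≤ x := by
  obtain ⟨k, hk⟩ := h
  intro x hx
  have : x ∈ l.toFinset := List.mem_toFinset.mpr hx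
  rw [hk] at this
  exact (Finset.mem_Icc.mp this).1

theorem maxLetter_mem {l : List ℕ} (h : IsPacked l) (hne : l ≠ []) : maxLetter l ∈ l := by
  obtain ⟨k, hk⟩ := h
  obtain ⟨x, hx⟩ := List.exists_mem_of_ne_nil l hne
  have hxk : x ∈ Finset.Icc 1 k := by rw [← hk]; exact List.mem_toFinset.mpr hx
  have hk1 : 1 ≤ k := le_trans (Finset.mem_Icc.mp hxk).1 (Finset.mem_Icc.mp hxk).2
  have hkl : k ∈ l := by
    rw [← List.mem_toFinset, hk]; exact Finset.mem_Icc.mpr ⟨hk1, le_refl _⟩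
  have hle : ∀ y ∈ l, y ≤ k := by
    intro y hy
    have : y ∈ Finset.Icc 1 k := by rw [← hk]; exact List.mem_toFinset.mpr hy
    exact (Finset.mem_Icc.mp this).2
  have : maxLetter l = k := le_antisymm (maxLetter_le hle) (le_maxLetter hkl)
  rw [this]; exact hkl

theorem Inc_Inc_eq_Inc {α β γ δ α' β' : ℕ} {l : List ℕ}
    (h : ∀ x ∈ l,
      (fun y => if β < y then y + α else y) (if δ < x then x + γ else x) =
        if β' < x then x + α' else x) :
    Inc α β (Inc γ δ l) = Inc α' β' l := by
  simp only [Inc, List.map_map]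
  exact List.map_congr_left fun x hx => h x hx

theorem Inc_Inc_eq_Inc_Inc {α β γ δ α' β' γ' δ' : ℕ} {l : List ℕ}
    (h : ∀ x ∈ l,
      (fun y => if β < y then y + α else y) (if δ < x then x + γ else x) =
        (fun y => if β' < y then y + α' else y) (if δ' < x then x + γ' else x)) :
    Inc α β (Inc γ δ l) = Inc α' β' (Inc γ' δ' l) := by
  simp only [Inc, List.map_map]
  exact List.map_congr_left fun x hx => h x hx

end RCAux

open RCAux in
/-- Sequential (nested) associativity for the right composition of packed words. -/
theorem rightComp_sequential_assoc (u v w : List ℕ)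
    (hu : IsPacked u) (hv : IsPacked v) (hw : IsPacked w) (i j : ℕ)
    (hi : i ∈ Finset.Icc 1 u.length) (hj : j ∈ Finset.Icc 1 v.length)
    (hw1 : 1 ≤ w.length) :
    rightComp (rightComp u i v) (i + j - 1) w = rightComp u i (rightComp v j w) := by
  simp only [Finset.mem_Icc] at hi hj
  obtain ⟨hi1, hin⟩ := hi
  obtain ⟨hj1, hjm⟩ := hj
  have wne : w ≠ [] := by intro h; rw [h] at hw1; simp at hw1
  have him : i - 1 < u.length := by omega
  have hjv : j - 1 < v.length := by omega
  have vne : v ≠ [] := by intro h; rw [h] at hjv; simp at hjv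
  have hupos : ∀ x ∈ u, 1 ≤ x := mem_pos hu
  have hvpos : ∀ x ∈ v, 1 ≤ x := mem_pos hv
  have hwpos : ∀ x ∈ w, 1 ≤ x := mem_pos hw
  simp only [rightComp]
  set a := u.getD (i - 1) 0 with ha
  set b := v.getD (j - 1) 0 with hb
  set s := maxLetter v with hs
  set t := maxLetter w with ht
  have hamem : a ∈ u := by rw [ha, List.getD_eq_getElem _ _ him]; exact List.getElem_mem him
  have ha1 : 1 ≤ a := hupos _ hamem
  have hbmem : b ∈ v := by rw [hb, List.getD_eq_getElem _ _ hjv]; exact List.getElem_mem hjv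
  have hb1 : 1 ≤ b := hvpos _ hbmem
  have hbs : b ≤ s := le_maxLetter hbmem
  have htmem : t ∈ w := maxLetter_mem hw wne
  have ht1 : 1 ≤ t := hwpos _ htmem
  have hvle : ∀ x ∈ v, x ≤ s := fun x hx => le_maxLetter hx
  have hwle : ∀ x ∈ w, x ≤ t := fun x hx => le_maxLetter hx
  have hlenA : (Inc (s - 1) a (u.take (i - 1))).length = i - 1 := by
    rw [length_Inc, List.length_take]; omega
  have hlenB : (Inc (a - 1) 0 v).length = v.length := length_Inc _ _ _
  have hidx : i + j - 1 - 1 = (i - 1) + (j - 1) := by omega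
  have hvjb : v[j - 1] = b := (List.getD_eq_getElem v 0 hjv).symm
  -- the pivot letter of rightComp u i v at position i+j-1
  have hG : (Inc (s - 1) a (u.take (i - 1)) ++ Inc (a - 1) 0 v
        ++ Inc (s - 1) (a - 1) (u.drop i)).getD (i + j - 1 - 1) 0 = a + b - 1 := by
    rw [hidx, List.append_assoc,
      List.getD_append_right _ _ _ _ (by rw [hlenA]; omega),
      show i - 1 + (j - 1) - (Inc (s - 1) a (u.take (i - 1))).length = j - 1 by
        rw [hlenA]; omega,
      List.getD_append _ _ _ _ (by rw [hlenB]; exact hjv),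
      List.getD_eq_getElem _ _ (by rw [hlenB]; exact hjv)]
    simp only [Inc, List.getElem_map, hvjb]
    split_ifs <;> omega
  -- the prefix of rightComp u i v before position i+j-1
  have htake : (Inc (s - 1) a (u.take (i - 1)) ++ Inc (a - 1) 0 v
        ++ Inc (s - 1) (a - 1) (u.drop i)).take (i + j - 1 - 1)
      = Inc (s - 1) a (u.take (i - 1)) ++ Inc (a - 1) 0 (v.take (j - 1)) := by
    rw [hidx, List.append_assoc, List.take_append,
      List.take_of_length_le (by rw [hlenA]; omega),
      show i - 1 + (j - 1) - (Inc (s - 1) a (u.take (i - 1))).length = j - 1 by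
        rw [hlenA]; omega]
    congr 1
    rw [List.take_append,
      show j - 1 - (Inc (a - 1) 0 v).length = 0 by rw [hlenB]; omega,
      List.take_zero, List.append_nil]
    simp [Inc, List.map_take]
  -- the suffix of rightComp u i v after position i+j-1
  have hdrop : (Inc (s - 1) a (u.take (i - 1)) ++ Inc (a - 1) 0 v
        ++ Inc (s - 1) (a - 1) (u.drop i)).drop (i + j - 1)
      = Inc (a - 1) 0 (v.drop j) ++ Inc (s - 1) (a - 1) (u.drop i) := by
    rw [List.append_assoc, List.drop_append,
      List.drop_eq_nil_of_le (by rw [hlenA]; omega), List.nil_append,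
      show i + j - 1 - (Inc (s - 1) a (u.take (i - 1))).length = j by rw [hlenA]; omega]
    rw [List.drop_append,
      show j - (Inc (a - 1) 0 v).length = 0 by rw [hlenB]; omega, List.drop_zero]
    congr 1
    simp [Inc, List.map_drop]
  -- the maximal letter of rightComp v j w
  have hM : maxLetter (Inc (t - 1) b (v.take (j - 1)) ++ Inc (b - 1) 0 w
        ++ Inc (t - 1) (b - 1) (v.drop j)) = s + t - 1 := by
    apply le_antisymm
    · apply maxLetter_le
      intro x hx
      simp only [List.mem_append, Inc, List.mem_map] at hx
      rcases hx with (⟨y, hy, rfl⟩ | ⟨y, hy, rfl⟩) | ⟨y, hy, rfl⟩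
      · have h1 : y ≤ s := hvle _ (List.take_subset _ _ hy)
        split_ifs <;> omega
      · have h1 : y ≤ t := hwle _ hy
        split_ifs <;> omega
      · have h1 : y ≤ s := hvle _ (List.drop_subset _ _ hy)
        split_ifs <;> omega
    · apply le_maxLetter
      rcases eq_or_lt_of_le hbs with hbe | hbl
      · have h1 : (if (0:ℕ) < t then t + (b - 1) else t) ∈ Inc (b - 1) 0 w :=
          List.mem_map_of_mem htmem
        have h2 : s + t - 1 = (if (0:ℕ) < t then t + (b - 1) else t) := by
          split_ifs <;> omega
        rw [h2]
        exact List.mem_append.mpr (Or.inl (List.mem_append.mpr (Or.inr h1)))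
      · have hsmem : s ∈ v := maxLetter_mem hv vne
        have hsplit : v = v.take (j - 1) ++ (b :: v.drop j) := by
          conv_lhs => rw [← List.take_append_drop (j - 1) v]
          congr 1
          rw [List.drop_eq_getElem_cons hjv, hvjb, show j - 1 + 1 = j by omega]
        rw [hsplit] at hsmem
        rcases List.mem_append.mp hsmem with h1 | h1
        · have h2 : (if b < s then s + (t - 1) else s) ∈ Inc (t - 1) b (v.take (j - 1)) :=
            List.mem_map_of_mem h1
          have h3 : s + t - 1 = (if b < s then s + (t - 1) else s) := by
            split_ifs <;> omega
          rw [h3]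
          exact List.mem_append.mpr (Or.inl (List.mem_append.mpr (Or.inl h2)))
        · rcases List.mem_cons.mp h1 with h1 | h1
          · omega
          · have h2 : (if b - 1 < s then s + (t - 1) else s) ∈ Inc (t - 1) (b - 1) (v.drop j) :=
              List.mem_map_of_mem h1
            have h3 : s + t - 1 = (if b - 1 < s then s + (t - 1) else s) := by
              split_ifs <;> omega
            rw [h3]
            exact List.mem_append.mpr (Or.inr h2)
  rw [hG, htake, hdrop, hM]
  simp only [Inc_append]
  -- now match the five pieces
  have p1 : Inc (t - 1) (a + b - 1) (Inc (s - 1) a (u.take (i - 1)))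
      = Inc (s + t - 1 - 1) a (u.take (i - 1)) := by
    apply Inc_Inc_eq_Inc
    intro x hx
    simp only
    split_ifs <;> omega
  have p2 : Inc (t - 1) (a + b - 1) (Inc (a - 1) 0 (v.take (j - 1)))
      = Inc (a - 1) 0 (Inc (t - 1) b (v.take (j - 1))) := by
    apply Inc_Inc_eq_Inc_Inc
    intro x hx
    have hx1 : 1 ≤ x := hvpos _ (List.take_subset _ _ hx)
    simp only
    split_ifs <;> omega
  have p3 : Inc (a + b - 1 - 1) 0 w = Inc (a - 1) 0 (Inc (b - 1) 0 w) := by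
    symm
    apply Inc_Inc_eq_Inc
    intro x hx
    have hx1 : 1 ≤ x := hwpos _ hx
    simp only
    split_ifs <;> omega
  have p4 : Inc (t - 1) (a + b - 1 - 1) (Inc (a - 1) 0 (v.drop j))
      = Inc (a - 1) 0 (Inc (t - 1) (b - 1) (v.drop j)) := by
    apply Inc_Inc_eq_Inc_Inc
    intro x hx
    have hx1 : 1 ≤ x := hvpos _ (List.drop_subset _ _ hx)
    simp only
    split_ifs <;> omega
  have p5 : Inc (t - 1) (a + b - 1 - 1) (Inc (s - 1) (a - 1) (u.drop i))
      = Inc (s + t - 1 - 1) (a - 1) (u.drop i) := by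
    apply Inc_Inc_eq_Inc
    intro x hx
    simp only
    split_ifs <;> omega
  rw [p1, p2, p3, p4, p5]
  simp only [List.append_assoc]
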